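/- arXiv:1412.1797 — 3 statements merged into one kernel-verified Lean document; each statement's English description precedes it below -/
import Mathlib

section
/- For Lipschitz 1-periodic functions x, y : ℝ → ℝ with Fourier coefficients x̂(k), ŷ(k), the following identity holds: (1/4π²)∫₀¹(ẋ² + ẏ²) − (1/2π)∫₀¹(ẏx − ẋy) = Σ_{k∈ℤ} (k² − |k|)(|x̂(k)|² + |ŷ(k)|²) + Σ_{k∈ℤ} |k| · |ŷ(k) + i·sgn(k)·x̂(k)|². -/
open Real MeasureTheory Filter Topology Set AddCircle

instance fact_zero_lt_one_real : Fact ((0:ℝ) < 1) := ⟨one_pos⟩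

noncomputable def ec (k : ℤ) (s : ℝ) : ℂ := Complex.exp (-(2 * (π:ℂ) * Complex.I * k * s))

lemma ec_continuous (k : ℤ) : Continuous (ec k) := by
  unfold ec; fun_prop

lemma ec_norm (k : ℤ) (s : ℝ) : ‖ec k s‖ = 1 := by
  unfold ec
  rw [Complex.norm_exp]
  have : (-(2 * (π:ℂ) * Complex.I * k * s)).re = 0 := by simp
  rw [this, Real.exp_zero]

lemma ec_periodic (k : ℤ) : Function.Periodic (ec k) 1 := by
  intro s
  unfold ec
  push_cast
  have : -(2 * (π:ℂ) * Complex.I * k * (s+1)) = -(2 * (π:ℂ) * Complex.I * k * s) + ((-k : ℤ) : ℂ) * (2 * π * Complex.I) := by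
    push_cast; ring
  rw [this, Complex.exp_add, Complex.exp_int_mul_two_pi_mul_I, mul_one]

lemma ec_add (k : ℤ) (s h : ℝ) :
    ec k (s + h) = ec k s * Complex.exp (-(2 * (π:ℂ) * Complex.I * k * h)) := by
  unfold ec
  rw [← Complex.exp_add]
  congr 1
  push_cast; ring

/-- key integration by parts identity for Lipschitz periodic functions -/
lemma key_ibp (f : ℝ → ℝ) (K : NNReal) (hf : LipschitzWith K f)
    (hper : ∀ s, f (s + 1) = f s) (k : ℤ) :
    (∫ s in (0:ℝ)..1, Complex.ofReal (deriv f s) * ec k s)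
      = 2 * (π:ℂ) * Complex.I * k * ∫ s in (0:ℝ)..1, (f s : ℂ) * ec k s := by
  set c : ℂ := ∫ s in (0:ℝ)..1, (f s : ℂ) * ec k s with hc
  set h : ℕ → ℝ := fun n => 1 / (n + 1) with hh
  have hpos : ∀ n, 0 < h n := fun n => by positivity
  have hlim : Tendsto h atTop (𝓝 0) := tendsto_one_div_add_atTop_nhds_zero_nat
  set Φ : ℕ → ℝ → ℂ := fun n s => (((f (s + h n) - f s) / h n : ℝ) : ℂ) * ec k s with hΦ
  have fc : Continuous f := hf.continuous
  have fec_per : Function.Periodic (fun u => (f u : ℂ) * ec k u) 1 := by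
    intro u; simp [hper u, ec_periodic k u]
  -- Claim A
  have claimA : ∀ n, (∫ s in (0:ℝ)..1, Φ n s)
      = ((Complex.exp (2 * (π:ℂ) * Complex.I * k * h n) - 1) / (h n)) * c := by
    intro n
    have int1 : IntervalIntegrable (fun s => ((f (s + h n) : ℂ)) * ec k s) volume 0 1 :=
      ((Complex.continuous_ofReal.comp (fc.comp (continuous_add_right _))).mul
        (ec_continuous k)).intervalIntegrable 0 1
    have int2 : IntervalIntegrable (fun s => ((f s : ℂ)) * ec k s) volume 0 1 :=
      ((Complex.continuous_ofReal.comp fc).mul (ec_continuous k)).intervalIntegrable 0 1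
    have step1 : (∫ s in (0:ℝ)..1, Φ n s)
        = (1 / (h n) : ℂ) * ((∫ s in (0:ℝ)..1, (f (s + h n) : ℂ) * ec k s)
            - ∫ s in (0:ℝ)..1, (f s : ℂ) * ec k s) := by
      rw [← intervalIntegral.integral_sub int1 int2, ← intervalIntegral.integral_const_mul]
      apply intervalIntegral.integral_congr
      intro s _
      simp only [hΦ]
      push_cast
      field_simp
    have step2 : (∫ s in (0:ℝ)..1, (f (s + h n) : ℂ) * ec k s)
        = Complex.exp (2 * (π:ℂ) * Complex.I * k * h n) * c := by
      have e1 : ∀ s : ℝ, (f (s + h n) : ℂ) * ec k s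
          = Complex.exp (2 * (π:ℂ) * Complex.I * k * h n) * ((f (s + h n) : ℂ) * ec k (s + h n)) := by
        intro s
        rw [ec_add]
        rw [show (2 * (π:ℂ) * Complex.I * k * h n) = -(-(2 * (π:ℂ) * Complex.I * ↑k * ↑(h n))) by ring]
        rw [Complex.exp_neg]
        field_simp [Complex.exp_ne_zero]
      simp_rw [e1]
      rw [intervalIntegral.integral_const_mul]
      congr 1
      have := intervalIntegral.integral_comp_add_right (a := (0:ℝ)) (b := 1)
        (fun u => (f u : ℂ) * ec k u) (h n)
      rw [this]
      have := fec_per.intervalIntegral_add_eq (0 + h n) 0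
      simp only [zero_add] at this ⊢
      rw [add_comm (h n) 1] at this
      rw [this]
    rw [step1, step2]
    ring
  -- Claim B : limit of RHS
  have claimB : Tendsto (fun n => ((Complex.exp (2 * (π:ℂ) * Complex.I * k * h n) - 1) / (h n)) * c)
      atTop (𝓝 (2 * (π:ℂ) * Complex.I * k * c)) := by
    have hd : HasDerivAt (fun t : ℝ => Complex.exp (2 * (π:ℂ) * Complex.I * k * t))
        (2 * (π:ℂ) * Complex.I * k) 0 := by
      have h1 : HasDerivAt (fun t : ℝ => ((t : ℂ))) 1 0 := Complex.ofRealCLM.hasDerivAt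
      have h2 := (h1.const_mul (2 * (π:ℂ) * Complex.I * k)).cexp
      simpa using h2
    have hs := hasDerivAt_iff_tendsto_slope.mp hd
    have hcomp : Tendsto (fun n => (0 : ℝ) + h n) atTop (𝓝[≠] 0) := by
      rw [tendsto_nhdsWithin_iff]
      constructor
      · simpa using hlim
      · exact Eventually.of_forall fun n => by simp [(hpos n).ne']
    have := (hs.comp (by simpa using hcomp)).mul_const c
    apply this.congr'
    filter_upwards [] with n
    have hne : ((h n : ℂ)) ≠ 0 := by
      exact_mod_cast (hpos n).ne'
    show slope (fun t : ℝ => Complex.exp (2 * (π:ℂ) * Complex.I * k * t)) 0 (h n) * c = _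
    rw [slope_def_module]
    simp only [sub_zero, Complex.ofReal_zero, mul_zero, Complex.exp_zero, Complex.real_smul,
      Complex.ofReal_inv]
    field_simp
  -- Claim C : dominated convergence
  have claimC : Tendsto (fun n => ∫ s in (0:ℝ)..1, Φ n s) atTop
      (𝓝 (∫ s in (0:ℝ)..1, Complex.ofReal (deriv f s) * ec k s)) := by
    apply intervalIntegral.tendsto_integral_filter_of_dominated_convergence
      (bound := fun _ => (K : ℝ))
    · filter_upwards [] with n
      exact (((Complex.continuous_ofReal.comp
        (((fc.comp (continuous_add_right _)).sub fc).div_const _)).mul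
        (ec_continuous k))).aestronglyMeasurable
    · filter_upwards [] with n
      filter_upwards [] with s _
      have h1 : ‖Φ n s‖ = |(f (s + h n) - f s) / h n| := by
        rw [hΦ]
        simp only [norm_mul, ec_norm, mul_one, Complex.norm_real, Real.norm_eq_abs]
      rw [h1, abs_div, abs_of_pos (hpos n), div_le_iff₀ (hpos n)]
      have := hf.dist_le_mul (s + h n) s
      rw [Real.dist_eq, Real.dist_eq] at this
      simpa [abs_of_pos (hpos n)] using this
    · exact intervalIntegrable_const
    · filter_upwards [hf.ae_differentiableAt] with s hs _
      have hslope := hasDerivAt_iff_tendsto_slope.mp hs.hasDerivAt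
      have hcomp : Tendsto (fun n => s + h n) atTop (𝓝[≠] s) := by
        rw [tendsto_nhdsWithin_iff]
        constructor
        · simpa using tendsto_const_nhds.add hlim
        · exact Eventually.of_forall fun n => by simp [(hpos n).ne']
      have h2 := hslope.comp hcomp
      have h3 : (fun n => (f (s + h n) - f s) / h n)
          = (slope f s ∘ fun n => s + h n) := by
        funext n
        simp [slope_def_field]
      have h4 : Tendsto (fun n => ((f (s + h n) - f s) / h n : ℝ)) atTop (𝓝 (deriv f s)) := by
        rw [h3]; exact h2
      exact ((Complex.continuous_ofReal.tendsto _).comp h4).mul_const (ec k s)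
  have claimC' : Tendsto
      (fun n => ((Complex.exp (2 * (π:ℂ) * Complex.I * k * h n) - 1) / (h n)) * c) atTop
      (𝓝 (∫ s in (0:ℝ)..1, Complex.ofReal (deriv f s) * ec k s)) := by
    apply claimC.congr
    intro n; exact claimA n
  exact tendsto_nhds_unique claimC' claimB

noncomputable def lift1 (g : ℝ → ℝ) : AddCircle (1:ℝ) → ℂ :=
  AddCircle.liftIoc 1 0 (fun s => (g s : ℂ))

lemma lift1_measurable {g : ℝ → ℝ} (hg : Measurable g) : Measurable (lift1 g) := by
  have h1 : Measurable (fun s : ℝ => (g s : ℂ)) := Complex.measurable_ofReal.comp hg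
  have h2 : Measurable (⇑(AddCircle.equivIoc (1:ℝ) 0)) :=
    (AddCircle.measurableEquivIoc 1 0).measurable
  exact (h1.comp measurable_subtype_coe).comp h2

lemma lift1_norm_le {g : ℝ → ℝ} {C : ℝ} (hC : ∀ s, |g s| ≤ C) (t : AddCircle (1:ℝ)) :
    ‖lift1 g t‖ ≤ C := by
  unfold lift1 AddCircle.liftIoc
  simp only [Function.comp_apply, Set.restrict_apply, Complex.norm_real, Real.norm_eq_abs]
  exact hC _

lemma lift1_memLp {g : ℝ → ℝ} (hg : Measurable g) {C : ℝ} (hC : ∀ s, |g s| ≤ C) :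
    MemLp (lift1 g) 2 (@haarAddCircle 1 _) :=
  MemLp.of_bound (lift1_measurable hg).aestronglyMeasurable C
    (Eventually.of_forall (lift1_norm_le hC))

lemma fourierCoeff_lift1 {g : ℝ → ℝ} (k : ℤ) :
    fourierCoeff (lift1 g) k = ∫ s in (0:ℝ)..1, (g s : ℂ) * ec k s := by
  rw [fourierCoeff_eq_intervalIntegral _ k 0]
  norm_num
  apply intervalIntegral.integral_congr_ae
  filter_upwards [] with s hs
  rw [uIoc_of_le (by norm_num : (0:ℝ) ≤ 1)] at hs
  have hmem : s ∈ Ioc (0:ℝ) (0 + 1) := by simpa using hs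
  unfold lift1
  rw [AddCircle.liftIoc_coe_apply hmem, mul_comm]
  congr 1
  unfold ec
  rw [← Complex.exp_conj]
  congr 1
  simp only [map_mul, Complex.conj_I, map_ofNat, Complex.conj_ofReal, map_intCast]
  ring

lemma haar_integral_eq {E : Type*} [NormedAddCommGroup E] [NormedSpace ℝ E]
    (F : AddCircle (1:ℝ) → E) :
    ∫ t, F t ∂(@haarAddCircle 1 _) = ∫ s in (0:ℝ)..1, F ↑s := by
  have h := AddCircle.intervalIntegral_preimage 1 0 F
  rw [volume_eq_smul_haarAddCircle, integral_smul_measure] at h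
  simp only [ENNReal.ofReal_one, ENNReal.toReal_one, one_smul, zero_add] at h
  exact h.symm

lemma fourierCoeff_congr_ae' {F G : AddCircle (1:ℝ) → ℂ}
    (h : F =ᵐ[@haarAddCircle 1 _] G) (k : ℤ) : fourierCoeff F k = fourierCoeff G k := by
  unfold fourierCoeff
  apply integral_congr_ae
  filter_upwards [h] with t ht
  rw [ht]

lemma parseval_lemma (g : ℝ → ℝ) (hg : Measurable g) (C : ℝ) (hC : ∀ s, |g s| ≤ C) :
    Summable (fun k : ℤ => ‖∫ s in (0:ℝ)..1, (g s : ℂ) * ec k s‖ ^ 2)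
    ∧ ∑' k : ℤ, ‖∫ s in (0:ℝ)..1, (g s : ℂ) * ec k s‖ ^ 2
        = ∫ s in (0:ℝ)..1, (g s) ^ 2 := by
  set G := (lift1_memLp hg hC).toLp (lift1 g) with hG
  have hcoe : (G : AddCircle (1:ℝ) → ℂ) =ᵐ[@haarAddCircle 1 _] lift1 g :=
    (lift1_memLp hg hC).coeFn_toLp
  have hfc : ∀ k : ℤ, fourierCoeff (G : AddCircle (1:ℝ) → ℂ) k
      = ∫ s in (0:ℝ)..1, (g s : ℂ) * ec k s := by
    intro k
    rw [fourierCoeff_congr_ae' hcoe k, fourierCoeff_lift1 k]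
  constructor
  · have hsum := (lp.memℓp (fourierBasis.repr G)).summable (by norm_num : 0 < (2:ENNReal).toReal)
    have : ∀ k : ℤ, ‖fourierBasis.repr G k‖ ^ (2:ENNReal).toReal
        = ‖∫ s in (0:ℝ)..1, (g s : ℂ) * ec k s‖ ^ 2 := by
      intro k
      rw [fourierBasis_repr, hfc k]
      norm_num
    exact Summable.congr hsum this
  · have hpars := tsum_sq_fourierCoeff G
    have h1 : ∑' k : ℤ, ‖∫ s in (0:ℝ)..1, (g s : ℂ) * ec k s‖ ^ 2
        = ∑' i : ℤ, ‖fourierCoeff (G : AddCircle (1:ℝ) → ℂ) i‖ ^ 2 := by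
      congr 1; funext k; rw [hfc k]
    rw [h1, hpars]
    have h2 : ∫ t, ‖(G : AddCircle (1:ℝ) → ℂ) t‖ ^ 2 ∂(@haarAddCircle 1 _)
        = ∫ t, ‖lift1 g t‖ ^ 2 ∂(@haarAddCircle 1 _) := by
      apply integral_congr_ae
      filter_upwards [hcoe] with t ht
      rw [ht]
    rw [h2, haar_integral_eq (fun t => ‖lift1 g t‖ ^ 2)]
    apply intervalIntegral.integral_congr_ae
    filter_upwards [] with s hs
    rw [uIoc_of_le (by norm_num : (0:ℝ) ≤ 1)] at hs
    have hmem : s ∈ Ioc (0:ℝ) (0 + 1) := by simpa using hs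
    unfold lift1
    rw [AddCircle.liftIoc_coe_apply hmem]
    simp [sq_abs]

lemma inner_lemma (g₁ g₂ : ℝ → ℝ) (hg₁ : Measurable g₁) (hg₂ : Measurable g₂)
    (C₁ C₂ : ℝ) (hC₁ : ∀ s, |g₁ s| ≤ C₁) (hC₂ : ∀ s, |g₂ s| ≤ C₂) :
    HasSum (fun k : ℤ => (starRingEnd ℂ) (∫ s in (0:ℝ)..1, (g₁ s : ℂ) * ec k s)
        * ∫ s in (0:ℝ)..1, (g₂ s : ℂ) * ec k s)
      ((∫ s in (0:ℝ)..1, g₁ s * g₂ s : ℝ) : ℂ) := by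
  set G₁ := (lift1_memLp hg₁ hC₁).toLp (lift1 g₁) with hG₁
  set G₂ := (lift1_memLp hg₂ hC₂).toLp (lift1 g₂) with hG₂
  have hcoe₁ : (G₁ : AddCircle (1:ℝ) → ℂ) =ᵐ[@haarAddCircle 1 _] lift1 g₁ :=
    (lift1_memLp hg₁ hC₁).coeFn_toLp
  have hcoe₂ : (G₂ : AddCircle (1:ℝ) → ℂ) =ᵐ[@haarAddCircle 1 _] lift1 g₂ :=
    (lift1_memLp hg₂ hC₂).coeFn_toLp
  have hfc₁ : ∀ k : ℤ, fourierCoeff ((G₁ : AddCircle (1:ℝ) → ℂ)) k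
      = ∫ s in (0:ℝ)..1, (g₁ s : ℂ) * ec k s := fun k => by
    rw [fourierCoeff_congr_ae' hcoe₁ k, fourierCoeff_lift1 k]
  have hfc₂ : ∀ k : ℤ, fourierCoeff ((G₂ : AddCircle (1:ℝ) → ℂ)) k
      = ∫ s in (0:ℝ)..1, (g₂ s : ℂ) * ec k s := fun k => by
    rw [fourierCoeff_congr_ae' hcoe₂ k, fourierCoeff_lift1 k]
  have hs := fourierBasis.hasSum_inner_mul_inner G₁ G₂
  have hterm : ∀ k : ℤ,
      (inner ℂ G₁ ((fourierBasis : HilbertBasis ℤ ℂ (Lp ℂ 2 (@haarAddCircle 1 _))) k) : ℂ)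
        * inner ℂ ((fourierBasis : HilbertBasis ℤ ℂ (Lp ℂ 2 (@haarAddCircle 1 _))) k) G₂
      = (starRingEnd ℂ) (∫ s in (0:ℝ)..1, (g₁ s : ℂ) * ec k s)
        * ∫ s in (0:ℝ)..1, (g₂ s : ℂ) * ec k s := by
    intro k
    have hb : ∀ (G : Lp ℂ 2 (@haarAddCircle 1 _)),
        (inner ℂ ((fourierBasis : HilbertBasis ℤ ℂ (Lp ℂ 2 (@haarAddCircle 1 _))) k) G : ℂ)
          = fourierBasis.repr G k := by
      intro G
      rw [HilbertBasis.repr_apply_apply]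
    rw [← inner_conj_symm G₁, hb G₁, hb G₂, fourierBasis_repr, fourierBasis_repr, hfc₁, hfc₂]
  have hinner : (inner ℂ G₁ G₂ : ℂ) = ((∫ s in (0:ℝ)..1, g₁ s * g₂ s : ℝ) : ℂ) := by
    rw [MeasureTheory.L2.inner_def]
    have : ∫ t, (starRingEnd ℂ) ((G₁ : AddCircle (1:ℝ) → ℂ) t) * (G₂ : AddCircle (1:ℝ) → ℂ) t
          ∂(@haarAddCircle 1 _)
        = ∫ t, (starRingEnd ℂ) (lift1 g₁ t) * lift1 g₂ t ∂(@haarAddCircle 1 _) := by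
      apply integral_congr_ae
      filter_upwards [hcoe₁, hcoe₂] with t h1 h2
      rw [h1, h2]
    simp only [RCLike.inner_apply]
    simp only [mul_comm ((G₂ : AddCircle (1:ℝ) → ℂ) _)]
    rw [this, haar_integral_eq (fun t => (starRingEnd ℂ) (lift1 g₁ t) * lift1 g₂ t)]
    rw [← intervalIntegral.integral_ofReal]
    apply intervalIntegral.integral_congr_ae
    filter_upwards [] with s hs
    rw [uIoc_of_le (by norm_num : (0:ℝ) ≤ 1)] at hs
    have hmem : s ∈ Ioc (0:ℝ) (0 + 1) := by simpa using hs
    unfold lift1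
    rw [AddCircle.liftIoc_coe_apply hmem, AddCircle.liftIoc_coe_apply hmem]
    simp [Complex.conj_ofReal]
  rw [hinner] at hs
  exact hs.congr_fun fun k => (hterm k).symm

section helpers
lemma lip_per_bound (f : ℝ → ℝ) (K : NNReal) (hf : LipschitzWith K f)
    (hper : ∀ s, f (s + 1) = f s) : ∀ s, |f s| ≤ |f 0| + K := by
  intro s
  have hp : Function.Periodic f 1 := hper
  have h1 : f s = f (Int.fract s) := by
    have := hp.sub_int_mul_eq (x := s) ⌊s⌋
    rw [mul_one] at this
    rw [Int.fract, this]
  rw [h1]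
  have h2 : |f (Int.fract s) - f 0| ≤ (K : ℝ) * |Int.fract s - 0| := by
    have := hf.dist_le_mul (Int.fract s) 0
    rwa [Real.dist_eq, Real.dist_eq] at this
  have h3 : |Int.fract s - 0| ≤ 1 := by
    rw [sub_zero, abs_of_nonneg (Int.fract_nonneg s)]
    exact (Int.fract_lt_one s).le
  calc |f (Int.fract s)| ≤ |f 0| + |f (Int.fract s) - f 0| := by
        have := abs_sub_abs_le_abs_sub (f (Int.fract s)) (f 0); linarith [abs_sub_comm (f (Int.fract s)) (f 0)]
    _ ≤ |f 0| + (K:ℝ) * 1 := by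
        refine add_le_add le_rfl (h2.trans ?_)
        exact mul_le_mul_of_nonneg_left h3 K.2
    _ = |f 0| + K := by ring

lemma deriv_bound (f : ℝ → ℝ) (K : NNReal) (hf : LipschitzWith K f) :
    ∀ s, |deriv f s| ≤ (K : ℝ) := fun s => by
  simpa [Real.norm_eq_abs] using norm_deriv_le_of_lipschitz (x₀ := s) hf

lemma bdd_intervalIntegrable (g : ℝ → ℝ) (hg : Measurable g) (C : ℝ)
    (hC : ∀ s, |g s| ≤ C) : IntervalIntegrable g volume 0 1 := by
  rw [intervalIntegrable_iff]
  apply Measure.integrableOn_of_bounded (M := C)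
  · rw [uIoc_of_le (by norm_num : (0:ℝ) ≤ 1)]
    simp [Real.volume_Ioc]
  · exact hg.aestronglyMeasurable
  · exact Eventually.of_forall fun s => by simpa [Real.norm_eq_abs] using hC s

lemma term_id (k : ℤ) (a b : ℂ) :
    ((k : ℝ) ^ 2 - |(k : ℝ)|) * (‖a‖ ^ 2 + ‖b‖ ^ 2)
      + |(k : ℝ)| * ‖b + Complex.I * (Int.sign k : ℂ) * a‖ ^ 2
    = (k : ℝ) ^ 2 * (‖a‖ ^ 2 + ‖b‖ ^ 2)
      + 2 * k * ((starRingEnd ℂ) a * b).im := by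
  rcases lt_trichotomy k 0 with hk | hk | hk
  · have hs : (Int.sign k : ℂ) = -1 := by rw [Int.sign_eq_neg_one_of_neg hk]; norm_num
    have habs : |(k:ℝ)| = -(k:ℝ) := abs_of_neg (by exact_mod_cast hk)
    rw [hs, habs]
    simp only [Complex.sq_norm, Complex.normSq_apply, Complex.add_re, Complex.add_im,
      Complex.mul_re, Complex.mul_im, Complex.I_re, Complex.I_im, Complex.neg_re,
      Complex.neg_im, Complex.one_re, Complex.one_im, Complex.conj_re, Complex.conj_im]
    ring
  · subst hk; norm_num
  · have hs : (Int.sign k : ℂ) = 1 := by rw [Int.sign_eq_one_of_pos hk]; norm_num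
    have habs : |(k:ℝ)| = (k:ℝ) := abs_of_pos (by exact_mod_cast hk)
    rw [hs, habs]
    simp only [Complex.sq_norm, Complex.normSq_apply, Complex.add_re, Complex.add_im,
      Complex.mul_re, Complex.mul_im, Complex.I_re, Complex.I_im, Complex.one_re,
      Complex.one_im, Complex.conj_re, Complex.conj_im]
    ring

lemma cross_term_id (k : ℤ) (X Y : ℂ) :
    (starRingEnd ℂ) X * (2 * (π:ℂ) * Complex.I * k * Y)
      - (starRingEnd ℂ) Y * (2 * (π:ℂ) * Complex.I * k * X)
    = ((-(4 * π * k * ((starRingEnd ℂ) X * Y).im) : ℝ) : ℂ) := by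
  have hu : (starRingEnd ℂ) X * Y - (starRingEnd ℂ) Y * X
      = 2 * (((starRingEnd ℂ) X * Y).im : ℂ) * Complex.I := by
    have h1 := Complex.sub_conj ((starRingEnd ℂ) X * Y)
    rw [map_mul, Complex.conj_conj] at h1
    push_cast at h1 ⊢
    linear_combination h1
  have hI := Complex.I_sq
  push_cast
  linear_combination (2 * (π:ℂ) * Complex.I * k) * hu
    + (4 * (π:ℂ) * k * (((starRingEnd ℂ) X * Y).im : ℂ)) * hI
end helpers

/-- Hurwitz's Fourier-series identity: the difference between the normalized
length-squared and the normalized signed area of a closed Lipschitz planar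
curve equals a sum of explicit nonnegative terms in the Fourier coefficients. -/
theorem hurwitz_identity
    (x y : ℝ → ℝ) (Kx Ky : NNReal)
    (hx : LipschitzWith Kx x) (hy : LipschitzWith Ky y)
    (hxper : ∀ s, x (s + 1) = x s) (hyper : ∀ s, y (s + 1) = y s)
    (xhat yhat : ℤ → ℂ)
    (hxhat : ∀ k, xhat k
      = ∫ s in (0:ℝ)..1, Complex.ofReal (x s) * Complex.exp (-(2 * (π:ℂ) * Complex.I * k * s)))
    (hyhat : ∀ k, yhat k
      = ∫ s in (0:ℝ)..1, Complex.ofReal (y s) * Complex.exp (-(2 * (π:ℂ) * Complex.I * k * s))) :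
    (1 / (4 * π ^ 2)) * (∫ s in (0:ℝ)..1, ((deriv x s) ^ 2 + (deriv y s) ^ 2))
      - (1 / (2 * π)) * (∫ s in (0:ℝ)..1, (deriv y s * x s - deriv x s * y s))
    = (∑' k : ℤ, ((k : ℝ) ^ 2 - |(k : ℝ)|) * (‖xhat k‖ ^ 2 + ‖yhat k‖ ^ 2))
      + ∑' k : ℤ, |(k : ℝ)| *
          ‖yhat k + Complex.I * (Int.sign k : ℂ) * xhat k‖ ^ 2 := by
  -- coefficients as our integrals
  have hX : ∀ k, xhat k = ∫ s in (0:ℝ)..1, (x s : ℂ) * ec k s := fun k => hxhat k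
  have hY : ∀ k, yhat k = ∫ s in (0:ℝ)..1, (y s : ℂ) * ec k s := fun k => hyhat k
  have hxm : Measurable x := hx.continuous.measurable
  have hym : Measurable y := hy.continuous.measurable
  have hdxm : Measurable (deriv x) := measurable_deriv x
  have hdym : Measurable (deriv y) := measurable_deriv y
  have hdxb := deriv_bound x Kx hx
  have hdyb := deriv_bound y Ky hy
  have hxb := lip_per_bound x Kx hx hxper
  have hyb := lip_per_bound y Ky hy hyper
  have hcdx : ∀ k : ℤ, (∫ s in (0:ℝ)..1, (deriv x s : ℝ) * ec k s : ℂ)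
      = 2 * (π:ℂ) * Complex.I * k * xhat k := fun k => by
    rw [key_ibp x Kx hx hxper k, ← hX k]
  have hcdy : ∀ k : ℤ, (∫ s in (0:ℝ)..1, (deriv y s : ℝ) * ec k s : ℂ)
      = 2 * (π:ℂ) * Complex.I * k * yhat k := fun k => by
    rw [key_ibp y Ky hy hyper k, ← hY k]
  have hfac : ∀ (k : ℤ) (z : ℂ), ‖2 * (π:ℂ) * Complex.I * k * z‖ ^ 2
      = 4 * π ^ 2 * ((k:ℝ) ^ 2 * ‖z‖ ^ 2) := by
    intro k z
    rw [norm_mul]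
    have h1 : ‖2 * (π:ℂ) * Complex.I * (k:ℂ)‖ = 2 * π * |(k:ℝ)| := by
      simp [norm_mul, abs_of_nonneg Real.pi_pos.le]
    rw [h1, mul_pow, mul_pow, sq_abs]
    ring
  -- Parseval for the two derivatives
  obtain ⟨SX', EX'⟩ := parseval_lemma (deriv x) hdxm Kx hdxb
  obtain ⟨SY', EY'⟩ := parseval_lemma (deriv y) hdym Ky hdyb
  have SX : Summable (fun k : ℤ => (k:ℝ) ^ 2 * ‖xhat k‖ ^ 2) := by
    refine (summable_mul_left_iff (a := 4 * π ^ 2) (by positivity)).mp ?_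
    exact SX'.congr fun k => by rw [hcdx k, hfac k]
  have SY : Summable (fun k : ℤ => (k:ℝ) ^ 2 * ‖yhat k‖ ^ 2) := by
    refine (summable_mul_left_iff (a := 4 * π ^ 2) (by positivity)).mp ?_
    exact SY'.congr fun k => by rw [hcdy k, hfac k]
  have EX : ∫ s in (0:ℝ)..1, (deriv x s) ^ 2
      = 4 * π ^ 2 * ∑' k : ℤ, (k:ℝ) ^ 2 * ‖xhat k‖ ^ 2 := by
    rw [← EX', ← tsum_mul_left]
    exact tsum_congr fun k => by rw [hcdx k, hfac k]
  have EY : ∫ s in (0:ℝ)..1, (deriv y s) ^ 2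
      = 4 * π ^ 2 * ∑' k : ℤ, (k:ℝ) ^ 2 * ‖yhat k‖ ^ 2 := by
    rw [← EY', ← tsum_mul_left]
    exact tsum_congr fun k => by rw [hcdy k, hfac k]
  -- cross term
  have H1 := inner_lemma x (deriv y) hxm hdym (|x 0| + Kx) Ky hxb hdyb
  have H2 := inner_lemma y (deriv x) hym hdxm (|y 0| + Ky) Kx hyb hdxb
  have H3 : HasSum (fun k : ℤ => ((-(4 * π * k * ((starRingEnd ℂ) (xhat k) * yhat k).im) : ℝ) : ℂ))
      (((∫ s in (0:ℝ)..1, x s * deriv y s) - ∫ s in (0:ℝ)..1, y s * deriv x s : ℝ) : ℂ) := by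
    have h := H1.sub H2
    rw [← Complex.ofReal_sub] at h
    refine h.congr_fun fun k => ?_
    rw [hcdx k, hcdy k, ← hX k, ← hY k]
    exact (cross_term_id k (xhat k) (yhat k)).symm
  have H4 : HasSum (fun k : ℤ => -(4 * π * k * ((starRingEnd ℂ) (xhat k) * yhat k).im))
      ((∫ s in (0:ℝ)..1, x s * deriv y s) - ∫ s in (0:ℝ)..1, y s * deriv x s) :=
    Complex.hasSum_ofReal.mp H3
  -- integrability facts
  have Ix2 : IntervalIntegrable (fun s => (deriv x s) ^ 2) volume 0 1 := by
    refine bdd_intervalIntegrable _ (hdxm.pow_const 2) ((Kx:ℝ) ^ 2) fun s => ?_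
    rw [abs_pow]
    exact pow_le_pow_left₀ (abs_nonneg _) (hdxb s) 2
  have Iy2 : IntervalIntegrable (fun s => (deriv y s) ^ 2) volume 0 1 := by
    refine bdd_intervalIntegrable _ (hdym.pow_const 2) ((Ky:ℝ) ^ 2) fun s => ?_
    rw [abs_pow]
    exact pow_le_pow_left₀ (abs_nonneg _) (hdyb s) 2
  have Ixy : IntervalIntegrable (fun s => deriv y s * x s) volume 0 1 := by
    refine bdd_intervalIntegrable _ (hdym.mul hxm) ((Ky:ℝ) * (|x 0| + Kx)) fun s => ?_
    rw [abs_mul]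
    exact mul_le_mul (hdyb s) (hxb s) (abs_nonneg _) Ky.2
  have Iyx : IntervalIntegrable (fun s => deriv x s * y s) volume 0 1 := by
    refine bdd_intervalIntegrable _ (hdxm.mul hym) ((Kx:ℝ) * (|y 0| + Ky)) fun s => ?_
    rw [abs_mul]
    exact mul_le_mul (hdxb s) (hyb s) (abs_nonneg _) Kx.2
  have hsplit1 : ∫ s in (0:ℝ)..1, ((deriv x s) ^ 2 + (deriv y s) ^ 2)
      = (∫ s in (0:ℝ)..1, (deriv x s) ^ 2) + ∫ s in (0:ℝ)..1, (deriv y s) ^ 2 :=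
    intervalIntegral.integral_add Ix2 Iy2
  have hsplit2 : ∫ s in (0:ℝ)..1, (deriv y s * x s - deriv x s * y s)
      = (∫ s in (0:ℝ)..1, x s * deriv y s) - ∫ s in (0:ℝ)..1, y s * deriv x s := by
    rw [intervalIntegral.integral_sub Ixy Iyx]
    congr 1
    · exact intervalIntegral.integral_congr fun s _ => mul_comm _ _
    · exact intervalIntegral.integral_congr fun s _ => mul_comm _ _
  -- summability of all pieces
  have Se : Summable (fun k : ℤ => 2 * (k:ℝ) * ((starRingEnd ℂ) (xhat k) * yhat k).im) := by
    have h5 := (H4.summable).mul_left (-(1 / (2 * π)))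
    refine h5.congr fun k => ?_
    field_simp
    ring
  have Sd : Summable (fun k : ℤ => (k:ℝ) ^ 2 * (‖xhat k‖ ^ 2 + ‖yhat k‖ ^ 2)) :=
    (SX.add SY).congr fun k => by ring
  have hb0 : ∀ k : ℤ, |(k:ℝ)| ≤ (k:ℝ) ^ 2 := by
    intro k
    rcases eq_or_ne k 0 with hk | hk
    · simp [hk]
    · have h1 : (1:ℝ) ≤ |(k:ℝ)| := by
        rw [← Int.cast_abs]
        exact_mod_cast Int.one_le_abs hk
      nlinarith [sq_abs (k:ℝ)]
  have Sb : Summable (fun k : ℤ =>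
      ((k : ℝ) ^ 2 - |(k : ℝ)|) * (‖xhat k‖ ^ 2 + ‖yhat k‖ ^ 2)) := by
    refine Summable.of_nonneg_of_le (fun k => ?_) (fun k => ?_) Sd
    · exact mul_nonneg (by linarith [hb0 k]) (by positivity)
    · refine mul_le_mul_of_nonneg_right ?_ (by positivity)
      linarith [abs_nonneg ((k:ℝ))]
  have hbc : ∀ k : ℤ,
      ((k : ℝ) ^ 2 - |(k : ℝ)|) * (‖xhat k‖ ^ 2 + ‖yhat k‖ ^ 2)
        + |(k : ℝ)| * ‖yhat k + Complex.I * (Int.sign k : ℂ) * xhat k‖ ^ 2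
      = (k:ℝ) ^ 2 * (‖xhat k‖ ^ 2 + ‖yhat k‖ ^ 2)
        + 2 * (k:ℝ) * ((starRingEnd ℂ) (xhat k) * yhat k).im := by
    intro k
    exact term_id k (xhat k) (yhat k)
  have Sc : Summable (fun k : ℤ =>
      |(k : ℝ)| * ‖yhat k + Complex.I * (Int.sign k : ℂ) * xhat k‖ ^ 2) := by
    refine ((Sd.add Se).sub Sb).congr fun k => ?_
    linarith [hbc k]
  -- final assembly
  rw [hsplit1, hsplit2, EX, EY, ← H4.tsum_eq]
  have h8 : (∑' k : ℤ, -(4 * π * (k:ℝ) * ((starRingEnd ℂ) (xhat k) * yhat k).im))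
      = (-2 * π) * ∑' k : ℤ, 2 * (k:ℝ) * ((starRingEnd ℂ) (xhat k) * yhat k).im := by
    rw [← tsum_mul_left]
    exact tsum_congr fun k => by ring
  rw [h8]
  have h9 : (∑' k : ℤ, ((k : ℝ) ^ 2 - |(k : ℝ)|) * (‖xhat k‖ ^ 2 + ‖yhat k‖ ^ 2))
      + (∑' k : ℤ, |(k : ℝ)| * ‖yhat k + Complex.I * (Int.sign k : ℂ) * xhat k‖ ^ 2)
      = ((∑' k : ℤ, (k:ℝ) ^ 2 * ‖xhat k‖ ^ 2) + ∑' k : ℤ, (k:ℝ) ^ 2 * ‖yhat k‖ ^ 2)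
        + ∑' k : ℤ, 2 * (k:ℝ) * ((starRingEnd ℂ) (xhat k) * yhat k).im := by
    rw [← Summable.tsum_add Sb Sc, ← Summable.tsum_add SX SY, ← Summable.tsum_add (SX.add SY) Se]
    exact tsum_congr fun k => by rw [hbc k]; ring
  rw [h9]
  have hπ : (π:ℝ) ≠ 0 := Real.pi_ne_zero
  field_simp
  ring
end

section
/- The function H(s) = (2π/(1 − cos(2πs)))·(s − sin(2πs)/(2π)), defined for s ∈ (0,1), is a strictly increasing bijection (indeed a diffeomorphism) from (0,1) onto (0,∞). -/
open Real


lemma Haux_svc {v : ℝ} (h0 : 0 < v) (h1 : v < π) : v * Real.cos v < Real.sin v := by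
  rcases lt_or_ge v (π / 2) with h | h
  · have hc : 0 < Real.cos v := Real.cos_pos_of_mem_Ioo ⟨by linarith, h⟩
    have ht := Real.lt_tan h0 h
    rw [Real.tan_eq_sin_div_cos, lt_div_iff₀ hc] at ht
    linarith
  · have hc : Real.cos v ≤ 0 :=
      Real.cos_nonpos_of_pi_div_two_le_of_le h (by linarith)
    have hsv : 0 < Real.sin v := Real.sin_pos_of_pos_of_lt_pi h0 h1
    nlinarith

lemma Haux_denom {s : ℝ} : 1 - Real.cos (2 * π * s) = 2 * Real.sin (π * s) ^ 2 := by
  have h : 2 * π * s = 2 * (π * s) := by ring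
  rw [h, Real.cos_two_mul]
  have := Real.sin_sq_add_cos_sq (π * s)
  nlinarith

lemma Haux_sinpos {s : ℝ} (hs : s ∈ Set.Ioo (0:ℝ) 1) : 0 < Real.sin (π * s) :=
  Real.sin_pos_of_pos_of_lt_pi (mul_pos Real.pi_pos hs.1)
    (by nlinarith [Real.pi_pos, hs.2])

lemma Haux_denom_pos {s : ℝ} (hs : s ∈ Set.Ioo (0:ℝ) 1) :
    0 < 1 - Real.cos (2 * π * s) := by
  rw [Haux_denom]; nlinarith [Haux_sinpos hs]

/-- The numerator of the derivative is positive. -/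
lemma Haux_key_pos {s : ℝ} (hs : s ∈ Set.Ioo (0:ℝ) 1) :
    0 < (1 - Real.cos (2 * π * s)) ^ 2
      - (2 * π * s - Real.sin (2 * π * s)) * Real.sin (2 * π * s) := by
  have hπ : (0:ℝ) < π := Real.pi_pos
  set v := π * s with hv
  have hsv : 0 < Real.sin v := Haux_sinpos hs
  have h2 : Real.sin (2 * π * s) = 2 * Real.sin v * Real.cos v := by
    rw [show 2 * π * s = 2 * v by rw [hv]; ring, Real.sin_two_mul]
  have key : (1 - Real.cos (2 * π * s)) ^ 2
      - (2 * π * s - Real.sin (2 * π * s)) * Real.sin (2 * π * s)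
      = 4 * Real.sin v * (Real.sin v - v * Real.cos v) := by
    rw [Haux_denom, h2, show 2 * π * s = 2 * v by rw [hv]; ring]
    have h3 := Real.sin_sq_add_cos_sq v
    nlinarith [h3]
  rw [key]
  have hv0 : 0 < v := mul_pos hπ hs.1
  have hv1 : v < π := by nlinarith [hs.2, mul_lt_mul_of_pos_left hs.2 hπ]
  have hvc := Haux_svc hv0 hv1
  nlinarith

lemma Haux_hasDeriv {s : ℝ} (hs : s ∈ Set.Ioo (0:ℝ) 1)
    (H : ℝ → ℝ)
    (hH : ∀ s, H s = (2 * π / (1 - Real.cos (2 * π * s))) * (s - Real.sin (2 * π * s) / (2 * π))) :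
    HasDerivAt H
      ((2 * π * ((1 - Real.cos (2 * π * s)) ^ 2
          - (2 * π * s - Real.sin (2 * π * s)) * Real.sin (2 * π * s)))
        / (1 - Real.cos (2 * π * s)) ^ 2) s := by
  have hD := Haux_denom_pos hs
  have hπ : (0:ℝ) < π := Real.pi_pos
  have hlin : ∀ x : ℝ, HasDerivAt (fun x : ℝ => 2 * π * x) (2 * π) x := fun x => by
    simpa using (hasDerivAt_id x).const_mul (2 * π)
  have hsin : HasDerivAt (fun x : ℝ => Real.sin (2 * π * x)) (Real.cos (2 * π * s) * (2 * π)) s :=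
    (Real.hasDerivAt_sin (2 * π * s)).comp s (hlin s)
  have hcos : HasDerivAt (fun x : ℝ => Real.cos (2 * π * x)) (-Real.sin (2 * π * s) * (2 * π)) s :=
    (Real.hasDerivAt_cos (2 * π * s)).comp s (hlin s)
  have hnum : HasDerivAt (fun x : ℝ => 2 * π * x - Real.sin (2 * π * x))
      (2 * π - Real.cos (2 * π * s) * (2 * π)) s := (hlin s).sub hsin
  have hden : HasDerivAt (fun x : ℝ => 1 - Real.cos (2 * π * x))
      (0 - -Real.sin (2 * π * s) * (2 * π)) s := (hasDerivAt_const s 1).sub hcos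
  have hg := hnum.div hden (ne_of_gt hD)
  have heq : H =ᶠ[nhds s] fun x : ℝ =>
      (2 * π * x - Real.sin (2 * π * x)) / (1 - Real.cos (2 * π * x)) := by
    have hcont : Continuous fun x : ℝ => 1 - Real.cos (2 * π * x) := by continuity
    have hopen : IsOpen {x : ℝ | 1 - Real.cos (2 * π * x) ≠ 0} :=
      isOpen_ne.preimage hcont
    filter_upwards [hopen.mem_nhds (by exact ne_of_gt hD)] with x hx
    rw [hH x]
    field_simp
  have h := hg.congr_of_eventuallyEq heq
  refine h.congr_deriv ?_
  rw [div_left_inj' (pow_ne_zero 2 (ne_of_gt hD))]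
  ring

/-- `H` equals the simple quotient form on `(0,1)`. -/
lemma Haux_val {s : ℝ} (hs : s ∈ Set.Ioo (0:ℝ) 1)
    (H : ℝ → ℝ)
    (hH : ∀ s, H s = (2 * π / (1 - Real.cos (2 * π * s))) * (s - Real.sin (2 * π * s) / (2 * π))) :
    H s = (2 * π * s - Real.sin (2 * π * s)) / (1 - Real.cos (2 * π * s)) := by
  have hD := Haux_denom_pos hs
  have hπ : (0:ℝ) < π := Real.pi_pos
  rw [hH s]
  field_simp

lemma Haux_pos {s : ℝ} (hs : s ∈ Set.Ioo (0:ℝ) 1)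
    (H : ℝ → ℝ)
    (hH : ∀ s, H s = (2 * π / (1 - Real.cos (2 * π * s))) * (s - Real.sin (2 * π * s) / (2 * π))) :
    0 < H s := by
  rw [Haux_val hs H hH]
  have hD := Haux_denom_pos hs
  have hu : 0 < 2 * π * s := by nlinarith [Real.pi_pos, hs.1]
  exact div_pos (by linarith [Real.sin_lt hu]) hD


lemma Haux_surj (H : ℝ → ℝ)
    (hH : ∀ s, H s = (2 * π / (1 - Real.cos (2 * π * s))) * (s - Real.sin (2 * π * s) / (2 * π)))
    (hcont : ContinuousOn H (Set.Ioo 0 1)) :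
    Set.SurjOn H (Set.Ioo 0 1) (Set.Ioi 0) := by
  intro y hy
  simp only [Set.mem_Ioi] at hy
  have hπ : (0:ℝ) < π := Real.pi_pos
  have hπ3 : (3:ℝ) < π := Real.pi_gt_three
  have hπ4 : π < 3.15 := by linarith [Real.pi_lt_d2]
  -- left endpoint a
  set a : ℝ := min (1 / (2 * π)) (2 * y / π ^ 3) with ha_def
  have ha0 : 0 < a := lt_min (by positivity) (by positivity)
  have ha2 : a * (2 * π) ≤ 1 := (le_div_iff₀ (by positivity)).mp (min_le_left _ _)
  have hay : a * π ^ 3 ≤ 2 * y := (le_div_iff₀ (by positivity)).mp (min_le_right _ _)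
  have ha1 : a < 1 := by nlinarith
  have haI : a ∈ Set.Ioo (0:ℝ) 1 := ⟨ha0, ha1⟩
  -- right endpoint b
  set ε : ℝ := min (1/4) (1 / (π * (1 + y))) with hε_def
  have hε0 : 0 < ε := lt_min (by norm_num) (by positivity)
  have hε4 : ε ≤ 1/4 := min_le_left _ _
  have hεy : ε * (π * (1 + y)) ≤ 1 := (le_div_iff₀ (by positivity)).mp (min_le_right _ _)
  set b : ℝ := 1 - ε with hb_def
  have hbI : b ∈ Set.Ioo (0:ℝ) 1 := ⟨by simp only [hb_def]; linarith, by simp only [hb_def]; linarith⟩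
  have hab : a < b := by
    have : a ≤ 1 / (2 * π) := min_le_left _ _
    have h6 : (1:ℝ) / (2 * π) < 1/4 := by rw [div_lt_div_iff₀ (by positivity) (by norm_num)]; linarith
    simp only [hb_def]; linarith
  -- H a < y
  have hHa : H a < y := by
    rw [Haux_val haI H hH, div_lt_iff₀ (Haux_denom_pos haI)]
    have hsc := Real.sin_gt_sub_cube (x := 2 * π * a) (by positivity)
    -- denominator lower bound : 1 - cos (2πa) ≥ 8 a^2
    have hms : 2 * a ≤ Real.sin (π * a) := by
      have h := Real.mul_le_sin (x := π * a) (by positivity) (by nlinarith)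
      have h2 : 2 / π * (π * a) = 2 * a := by field_simp
      linarith [h2 ▸ h]
    have hden : 8 * a ^ 2 ≤ 1 - Real.cos (2 * π * a) := by
      rw [Haux_denom]; nlinarith
    nlinarith [mul_le_mul_of_nonneg_left hden hy.le, mul_le_mul_of_nonneg_left hay (sq_nonneg a), sq_nonneg a, mul_pos hy (mul_pos ha0 ha0)]
  -- H b > y
  have hHb : y < H b := by
    rw [Haux_val hbI H hH, lt_div_iff₀ (Haux_denom_pos hbI)]
    have hcosb : 1 - Real.cos (2 * π * b) ≤ 2 * π ^ 2 * ε ^ 2 := by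
      have h1 : 2 * π * b = 2 * π - 2 * π * ε := by simp only [hb_def]; ring
      rw [h1, Real.cos_two_pi_sub]
      nlinarith [Real.one_sub_sq_div_two_le_cos (x := 2 * π * ε)]
    have hsinb : Real.sin (2 * π * b) ≤ 1 := Real.sin_le_one _
    have hb34 : (3:ℝ)/4 ≤ b := by simp only [hb_def]; linarith
    have hN : (3:ℝ) ≤ 2 * π * b - Real.sin (2 * π * b) := by
      nlinarith [mul_le_mul_of_nonneg_left hb34 (by positivity : (0:ℝ) ≤ 2 * π)]
    have hD0 : 0 < 1 - Real.cos (2 * π * b) := Haux_denom_pos hbI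
    -- y * D ≤ 2 y π² ε² ≤ 2 < 3 ≤ N
    have hm1 : π * ε ≤ 1 := by nlinarith
    have hm2 : y * (π * ε) ≤ 1 := by nlinarith
    nlinarith [mul_le_mul_of_nonneg_left hcosb hy.le,
      mul_le_mul hm2 hm1 (by positivity) (by norm_num)]
  -- intermediate value
  have hsub : Set.Icc a b ⊆ Set.Ioo (0:ℝ) 1 := fun x hx =>
    ⟨lt_of_lt_of_le ha0 hx.1, lt_of_le_of_lt hx.2 hbI.2⟩
  have := intermediate_value_Ioo hab.le (hcont.mono hsub)
  have hmem : y ∈ H '' Set.Ioo a b := this ⟨hHa, hHb⟩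
  obtain ⟨x, hx, hxy⟩ := hmem
  exact ⟨x, ⟨lt_trans ha0 hx.1, lt_trans hx.2 hbI.2⟩, hxy⟩


/-- The function `H(s) = (2π/(1 − cos 2πs))·(s − sin(2πs)/(2π))` is a strictly
increasing differentiable bijection from `(0,1)` onto `(0,∞)` with nonvanishing
derivative. -/
theorem H_strictMono_bijOn_diffeo
    (H : ℝ → ℝ)
    (hH : ∀ s, H s = (2 * π / (1 - Real.cos (2 * π * s))) * (s - Real.sin (2 * π * s) / (2 * π))) :
    StrictMonoOn H (Set.Ioo 0 1) ∧
    Set.BijOn H (Set.Ioo 0 1) (Set.Ioi 0) ∧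
    (∀ s ∈ Set.Ioo (0:ℝ) 1, DifferentiableAt ℝ H s ∧ deriv H s ≠ 0) := by
  have hπ : (0:ℝ) < π := Real.pi_pos
  have hderivpos : ∀ s ∈ Set.Ioo (0:ℝ) 1, 0 < deriv H s := by
    intro s hs
    rw [(Haux_hasDeriv hs H hH).deriv]
    exact div_pos (by nlinarith [Haux_key_pos hs]) (pow_pos (Haux_denom_pos hs) 2)
  have hcont : ContinuousOn H (Set.Ioo 0 1) := fun x hx =>
    ((Haux_hasDeriv hx H hH).differentiableAt.continuousAt).continuousWithinAt
  have hmono : StrictMonoOn H (Set.Ioo 0 1) := by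
    apply strictMonoOn_of_deriv_pos (convex_Ioo 0 1) hcont
    intro x hx
    rw [interior_Ioo] at hx
    exact hderivpos x hx
  refine ⟨hmono, ⟨fun s hs => Set.mem_Ioi.mpr (Haux_pos hs H hH), hmono.injOn,
    Haux_surj H hH hcont⟩, fun s hs => ⟨(Haux_hasDeriv hs H hH).differentiableAt,
    ne_of_gt (hderivpos s hs)⟩⟩
end

section
/- For any nonzero z ∈ ℂⁿ and any h > 0, the equation 2π·(|z|²/(1 − cos(2πs)))·(s − sin(2πs)/(2π)) = h has a unique solution s₀ ∈ (0,1). -/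
open Real

private lemma psi_pos {t : ℝ} (ht : 0 < t) (ht' : t ≤ π) :
    0 < Real.sin t - t * Real.cos t := by
  have hmono : StrictMonoOn (fun t => Real.sin t - t * Real.cos t) (Set.Icc 0 π) := by
    apply strictMonoOn_of_deriv_pos (convex_Icc 0 π)
    · fun_prop
    · intro x hx
      rw [interior_Icc] at hx
      have hd : HasDerivAt (fun t => Real.sin t - t * Real.cos t) (x * Real.sin x) x := by
        have h1 := (Real.hasDerivAt_sin x).sub ((hasDerivAt_id x).mul (Real.hasDerivAt_cos x))
        exact h1.congr_deriv (by simp only [id_eq]; ring)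
      rw [hd.deriv]
      exact mul_pos hx.1 (Real.sin_pos_of_pos_of_lt_pi hx.1 hx.2)
  have := hmono (Set.left_mem_Icc.2 Real.pi_pos.le) ⟨ht.le, ht'⟩ ht
  simpa using this

private lemma phi_pos {t : ℝ} (ht : 0 < t) (ht' : t ≤ π) :
    0 < 2 - 2 * Real.cos t - t * Real.sin t := by
  have hmono : StrictMonoOn (fun t => 2 - 2 * Real.cos t - t * Real.sin t) (Set.Icc 0 π) := by
    apply strictMonoOn_of_deriv_pos (convex_Icc 0 π)
    · fun_prop
    · intro x hx
      rw [interior_Icc] at hx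
      have hd : HasDerivAt (fun t => 2 - 2 * Real.cos t - t * Real.sin t)
          (Real.sin x - x * Real.cos x) x := by
        have h1 := (((Real.hasDerivAt_cos x).const_mul (2:ℝ)).const_sub 2).sub
          ((hasDerivAt_id x).mul (Real.hasDerivAt_sin x))
        exact h1.congr_deriv (by simp only [id_eq]; ring)
      rw [hd.deriv]
      exact psi_pos hx.1 hx.2.le
  have := hmono (Set.left_mem_Icc.2 Real.pi_pos.le) ⟨ht.le, ht'⟩ ht
  simpa using this

private lemma key_pos {t : ℝ} (ht : 0 < t) (ht' : t < 2 * π) :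
    0 < 2 - 2 * Real.cos t - t * Real.sin t := by
  rcases le_or_gt t π with h | h
  · exact phi_pos ht h
  · have hsin : Real.sin t < 0 := by
      have h1 : 0 < Real.sin (t - π) := Real.sin_pos_of_pos_of_lt_pi (by linarith) (by linarith)
      rw [Real.sin_sub_pi] at h1
      linarith
    have hcos : Real.cos t ≤ 1 := Real.cos_le_one t
    nlinarith

private lemma den_pos {t : ℝ} (ht : 0 < t) (ht' : t < 2 * π) : 0 < 1 - Real.cos t := by
  have h1 : Real.cos t ≤ 1 := Real.cos_le_one t
  have h2 : Real.cos t ≠ 1 := by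
    intro heq
    rw [Real.cos_eq_one_iff_of_lt_of_lt (by linarith) ht'] at heq
    exact ht.ne' heq
  cases h1.lt_or_eq with
  | inl h => linarith
  | inr h => exact absurd h h2

private lemma den_le {t : ℝ} (ht : 0 < t) (ht' : t < 2 * π) :
    1 - Real.cos t ≤ (2 * π - t) ^ 2 / 2 := by
  have hid : Real.cos t = 1 - 2 * Real.sin (t / 2) ^ 2 := by
    have h1 : Real.cos (2 * (t / 2)) = 2 * Real.cos (t / 2) ^ 2 - 1 := Real.cos_two_mul _
    have h2 := Real.sin_sq_add_cos_sq (t / 2)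
    have : (2 : ℝ) * (t / 2) = t := by ring
    rw [this] at h1
    linarith
  have hs1 : Real.sin (t / 2) ≤ (2 * π - t) / 2 := by
    have : Real.sin (π - t / 2) ≤ π - t / 2 :=
      (Real.sin_lt (by linarith)).le
    rw [Real.sin_pi_sub] at this
    linarith
  have hs0 : 0 ≤ Real.sin (t / 2) :=
    Real.sin_nonneg_of_nonneg_of_le_pi (by linarith) (by linarith)
  nlinarith [sq_nonneg (Real.sin (t / 2))]

/-- The core function. -/
noncomputable def geoF (s : ℝ) : ℝ :=
  (2 * π * s - Real.sin (2 * π * s)) / (1 - Real.cos (2 * π * s))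

private lemma geoF_hasDerivAt {s : ℝ} (hs : s ∈ Set.Ioo (0:ℝ) 1) :
    HasDerivAt geoF
      ((2 * π * (1 - Real.cos (2*π*s)) * (1 - Real.cos (2*π*s))
        - (2*π*s - Real.sin (2*π*s)) * (2 * π * Real.sin (2*π*s)))
        / (1 - Real.cos (2*π*s)) ^ 2) s := by
  have hpi := Real.pi_pos
  have htpos : 0 < 2 * π * s := by nlinarith [hs.1]
  have htlt : 2 * π * s < 2 * π := by nlinarith [hs.2]
  have hden := den_pos htpos htlt
  have hlin : HasDerivAt (fun s : ℝ => 2 * π * s) (2 * π) s := by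
    simpa using (hasDerivAt_id s).const_mul (2 * π)
  have hu : HasDerivAt (fun s : ℝ => 2 * π * s - Real.sin (2 * π * s))
      (2 * π - Real.cos (2 * π * s) * (2 * π)) s :=
    hlin.sub ((Real.hasDerivAt_sin (2 * π * s)).comp s hlin)
  have hv : HasDerivAt (fun s : ℝ => 1 - Real.cos (2 * π * s))
      (-(-Real.sin (2 * π * s) * (2 * π))) s :=
    (((Real.hasDerivAt_cos (2 * π * s)).comp s hlin)).const_sub 1
  have := hu.div hv hden.ne'
  exact this.congr_deriv (by ring)

private lemma geoF_strictMono : StrictMonoOn geoF (Set.Ioo (0:ℝ) 1) := by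
  have hpi := Real.pi_pos
  apply strictMonoOn_of_deriv_pos (convex_Ioo 0 1)
  · intro s hs
    have htpos : 0 < 2 * π * s := by nlinarith [hs.1]
    have htlt : 2 * π * s < 2 * π := by nlinarith [hs.2]
    have hden := den_pos htpos htlt
    exact ((geoF_hasDerivAt hs).continuousAt).continuousWithinAt
  · intro s hs
    rw [interior_Ioo] at hs
    rw [(geoF_hasDerivAt hs).deriv]
    have htpos : 0 < 2 * π * s := by nlinarith [hs.1]
    have htlt : 2 * π * s < 2 * π := by nlinarith [hs.2]
    have hden := den_pos htpos htlt
    have hkey := key_pos htpos htlt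
    have hsc := Real.sin_sq_add_cos_sq (2 * π * s)
    apply div_pos _ (by positivity)
    have hexp : 2 * π * (1 - Real.cos (2*π*s)) * (1 - Real.cos (2*π*s))
        - (2*π*s - Real.sin (2*π*s)) * (2 * π * Real.sin (2*π*s))
        = 2 * π * (2 - 2 * Real.cos (2*π*s) - (2*π*s) * Real.sin (2*π*s)) := by
      linear_combination (2*π) * hsc
    rw [hexp]
    exact mul_pos (by positivity) hkey

/-- For nonzero `z ∈ ℂⁿ` and `h > 0`, the equation
`2π·(|z|²/(1 − cos 2πs))·(s − sin(2πs)/(2π)) = h` has a unique solution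
`s₀ ∈ (0,1)`. -/
theorem exists_unique_geodesic_parameter
    (n : ℕ) (z : EuclideanSpace ℂ (Fin n)) (hz : z ≠ 0) (h : ℝ) (hh : 0 < h) :
    ∃! s₀ : ℝ, s₀ ∈ Set.Ioo (0:ℝ) 1 ∧
      2 * π * (‖z‖ ^ 2 / (1 - Real.cos (2 * π * s₀)))
        * (s₀ - Real.sin (2 * π * s₀) / (2 * π)) = h := by
  have hpi := Real.pi_pos
  set c : ℝ := ‖z‖ ^ 2 with hc_def
  have hc : 0 < c := by
    have : ‖z‖ ≠ 0 := norm_ne_zero_iff.2 hz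
    positivity
  set h' : ℝ := h / c with hh'_def
  have hh' : 0 < h' := div_pos hh hc
  -- the equation is equivalent to geoF s = h'
  have hequiv : ∀ s ∈ Set.Ioo (0:ℝ) 1,
      (2 * π * (c / (1 - Real.cos (2 * π * s)))
        * (s - Real.sin (2 * π * s) / (2 * π)) = h ↔ geoF s = h') := by
    intro s hs
    have htpos : 0 < 2 * π * s := by nlinarith [hs.1]
    have htlt : 2 * π * s < 2 * π := by nlinarith [hs.2]
    have hden := den_pos htpos htlt
    have hid : 2 * π * (c / (1 - Real.cos (2 * π * s)))
        * (s - Real.sin (2 * π * s) / (2 * π)) = c * geoF s := by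
      rw [geoF]; field_simp
    rw [hid, hh'_def, eq_div_iff hc.ne', mul_comm]
  -- point near 0 where geoF < h'
  set t₀ : ℝ := min π h' with ht₀_def
  have ht₀pos : 0 < t₀ := lt_min hpi hh'
  have ht₀pi : t₀ ≤ π := min_le_left _ _
  set sa : ℝ := t₀ / (2 * π) with hsa_def
  have hsa_arg : 2 * π * sa = t₀ := by
    rw [hsa_def]; field_simp
  have hsa_mem : sa ∈ Set.Ioo (0:ℝ) 1 := by
    constructor
    · positivity
    · rw [hsa_def, div_lt_one (by positivity)]; nlinarith
  have hFa : geoF sa < h' := by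
    have hden : 0 < 1 - Real.cos t₀ := den_pos ht₀pos (by nlinarith)
    have hpsi := psi_pos ht₀pos ht₀pi
    have : geoF sa < t₀ := by
      rw [geoF, hsa_arg, div_lt_iff₀ hden]
      nlinarith
    exact lt_of_lt_of_le this (min_le_right _ _)
  -- point near 1 where geoF > h'
  set δ : ℝ := min 1 (1 / h') with hδ_def
  have hδpos : 0 < δ := lt_min one_pos (by positivity)
  have hδ1 : δ ≤ 1 := min_le_left _ _
  have hδh : δ ≤ 1 / h' := min_le_right _ _
  set t₁ : ℝ := 2 * π - δ with ht₁_def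
  have ht₁pos : 0 < t₁ := by have := Real.pi_gt_three; rw [ht₁_def]; nlinarith
  have ht₁lt : t₁ < 2 * π := by rw [ht₁_def]; linarith
  set sb : ℝ := t₁ / (2 * π) with hsb_def
  have hsb_arg : 2 * π * sb = t₁ := by
    rw [hsb_def]; field_simp
  have hsb_mem : sb ∈ Set.Ioo (0:ℝ) 1 := by
    constructor
    · positivity
    · rw [hsb_def, div_lt_one (by positivity)]; linarith
  have hFb : h' < geoF sb := by
    have hdp : 0 < 1 - Real.cos t₁ := den_pos ht₁pos ht₁lt
    have hdl := den_le (t := t₁) ht₁pos ht₁lt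
    have hnum : t₁ - 1 ≤ t₁ - Real.sin t₁ := by
      have := Real.sin_le_one t₁; linarith
    have ht₁big : (1:ℝ) < t₁ - 1 := by have := Real.pi_gt_three; rw [ht₁_def]; nlinarith
    have hδsq : (2 * π - t₁) ^ 2 / 2 = δ ^ 2 / 2 := by rw [ht₁_def]; ring_nf
    rw [hδsq] at hdl
    have hstep : (t₁ - 1) / (δ ^ 2 / 2) ≤ geoF sb := by
      rw [geoF, hsb_arg]
      apply div_le_div₀ (by linarith) hnum hdp hdl
    have hbig : h' < (t₁ - 1) / (δ ^ 2 / 2) := by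
      rw [lt_div_iff₀ (by positivity)]
      have h1 : h' * δ ≤ 1 := by
        calc h' * δ ≤ h' * (1 / h') := by nlinarith
        _ = 1 := by field_simp
      nlinarith
    linarith
  -- intermediate value theorem
  have hab : sa < sb := by
    have h1 : sa ≤ 1 / 2 := by
      rw [hsa_def, div_le_iff₀ (by positivity)]; linarith
    have h2 : (1:ℝ) / 2 < sb := by
      rw [hsb_def, lt_div_iff₀ (by positivity)]
      have := Real.pi_gt_three; linarith
    linarith
  have hsub : Set.Icc sa sb ⊆ Set.Ioo (0:ℝ) 1 :=
    fun x hx => ⟨lt_of_lt_of_le hsa_mem.1 hx.1, lt_of_le_of_lt hx.2 hsb_mem.2⟩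
  have hcont : ContinuousOn geoF (Set.Icc sa sb) := by
    intro x hx
    exact ((geoF_hasDerivAt (hsub hx)).continuousAt).continuousWithinAt
  obtain ⟨s₀, hs₀mem, hs₀val⟩ :=
    intermediate_value_Ioo hab.le hcont ⟨hFa, hFb⟩
  have hs₀Ioo : s₀ ∈ Set.Ioo (0:ℝ) 1 :=
    ⟨lt_trans hsa_mem.1 hs₀mem.1, lt_trans hs₀mem.2 hsb_mem.2⟩
  refine ⟨s₀, ⟨hs₀Ioo, (hequiv s₀ hs₀Ioo).2 hs₀val⟩, ?_⟩
  rintro s₁ ⟨hs₁Ioo, hs₁val⟩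
  have h1 : geoF s₁ = h' := (hequiv s₁ hs₁Ioo).1 hs₁val
  have h2 : geoF s₀ = h' := hs₀val
  exact geoF_strictMono.injOn hs₁Ioo hs₀Ioo (by rw [h1, h2])
end
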